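/- arXiv:0709.1261 — 3 statements merged into one kernel-verified Lean document; each statement's English description precedes it below -/
import Mathlib

section
/- Let f be a monotone function of subexponential growth, d a degree bound, and ε > 0. Then there exists a constant K (depending on f, ε) such that for every finite graph G of vertex degree bound d and growth bounded by f, there is a set T ⊆ V(G) with |T| ≤ ε|V(G)| such that every connected component of the subgraph induced by V(G) \ T has at most K vertices. Consequently, every sequence of finite graphs of subexponential growth with uniformly bounded degrees is an antiexpander sequence. -/
open scoped Classical

noncomputable section

namespace GraphPaper

open Filter

variable {V W : Type*}

/-- The star of a vertex `y` in `G`: the subgraph consisting of `y`, its neighbours and the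
edges from `y` to its neighbours (realized as a graph on the full vertex set). -/
def graphStar (G : SimpleGraph V) (y : V) : SimpleGraph V where
  Adj a b := G.Adj a b ∧ (a = y ∨ b = y)
  symm := ⟨fun a b h => ⟨h.1.symm, h.2.symm⟩⟩
  loopless := ⟨fun a h => G.loopless.irrefl a h.1⟩

/-- Rooted isomorphism of graphs with distinguished roots. -/
def rootedIso (G : SimpleGraph V) (y : V) (H : SimpleGraph W) (z : W) : Prop :=
  ∃ e : V ≃ W, e y = z ∧ ∀ a b : V, G.Adj a b ↔ H.Adj (e a) (e b)

/-- δ(G,H): proportion of vertices whose stars differ up to rooted isomorphism. -/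
def starDelta [Fintype V] (G H : SimpleGraph V) : ℝ :=
  (Nat.card {y : V | ¬ rootedIso (graphStar G y) y (graphStar H y) y} : ℝ) /
    (Fintype.card V : ℝ)

/-- `H^σ`, the graph with edges `(σ x, σ y)` for `(x,y) ∈ E(H)`. -/
def permGraph (H : SimpleGraph V) (σ : Equiv.Perm V) : SimpleGraph V :=
  SimpleGraph.comap (σ.symm : V → V) H

/-- δ_s(G,H) = min over permutations σ of δ(G,H^σ). -/
def deltaS [Fintype V] (G H : SimpleGraph V) : ℝ :=
  ⨅ σ : Equiv.Perm V, starDelta G (permGraph H σ)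

/-- The disjoint union of `q` copies of `G`. -/
def copies (q : ℕ) (G : SimpleGraph V) : SimpleGraph (Fin q × V) where
  Adj a b := a.1 = b.1 ∧ G.Adj a.2 b.2
  symm := ⟨fun a b h => ⟨h.1.symm, h.2.symm⟩⟩
  loopless := ⟨fun a h => G.loopless.irrefl a.2 h.2⟩

/-- The geometric distance δ_ρ(G,H) = inf { δ_s(qG, rH) : q|V(G)| = r|V(H)| }, where the
two disjoint unions are represented on a common vertex set via an equivalence. -/
def deltaRho [Fintype V] [Fintype W] (G : SimpleGraph V) (H : SimpleGraph W) : ℝ :=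
  sInf { x : ℝ | ∃ q r : ℕ, 0 < q ∧ 0 < r ∧ q * Fintype.card V = r * Fintype.card W ∧
    x = ⨅ e : (Fin q × V) ≃ (Fin r × W),
      starDelta (copies q G) (SimpleGraph.comap (e : Fin q × V → Fin r × W) (copies r H)) }

/-- Vertex degree bound `d`. -/
def degBound (G : SimpleGraph V) (d : ℕ) : Prop := ∀ v : V, (G.neighborSet v).ncard ≤ d

/-- The ball of radius `r` around `x` in the shortest path metric. -/
def ballSet (G : SimpleGraph V) (x : V) (r : ℕ) : Set V :=
  {v | G.Reachable x v ∧ G.dist x v ≤ r}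

theorem root_mem (G : SimpleGraph V) (x : V) (r : ℕ) : x ∈ ballSet G x r :=
  ⟨SimpleGraph.Reachable.refl x, by simp [SimpleGraph.dist_self]⟩

/-- `B_r(x)` (rooted at `x`) represents the rooted pattern `(H, y)`. -/
def ballRep (G : SimpleGraph V) (x : V) (r : ℕ) (H : SimpleGraph W) (y : W) : Prop :=
  ∃ f : ballSet G x r ≃ W, f ⟨x, root_mem G x r⟩ = y ∧
    ∀ a b : ballSet G x r, G.Adj (a : V) (b : V) ↔ H.Adj (f a) (f b)

/-- `p_G(α)`: the frequency of vertices whose rooted `r`-ball represents the pattern `(H,y)`. -/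
def patternFreq [Fintype V] (G : SimpleGraph V) (r : ℕ) (H : SimpleGraph W) (y : W) : ℝ :=
  (Nat.card {x : V | ballRep G x r H y} : ℝ) / (Fintype.card V : ℝ)

/-- All connected components of `G` have at most `K` vertices. -/
def smallComps (G : SimpleGraph V) (K : ℕ) : Prop :=
  ∀ x : V, Nat.card {y : V | G.Reachable x y} ≤ K

/-- The subgraph induced on a set `s` (kept on the full vertex set). -/
def inducedOn (G : SimpleGraph V) (s : Set V) : SimpleGraph V where
  Adj a b := G.Adj a b ∧ a ∈ s ∧ b ∈ s
  symm := ⟨fun a b h => ⟨h.1.symm, h.2.2, h.2.1⟩⟩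
  loopless := ⟨fun a h => G.loopless.irrefl a h.1⟩

/-- The (inner) boundary of `s` in `G`. -/
def gBoundary (G : SimpleGraph V) (s : Set V) : Set V :=
  {x | x ∈ s ∧ ∃ y, y ∉ s ∧ G.Adj x y}

/-- The `s`-ball of `x` is the same (as a labeled subgraph) in `G₁` and `G₂`. -/
def sBallMatch (G₁ G₂ : SimpleGraph V) (s : ℕ) (x : V) : Prop :=
  ballSet G₁ x s = ballSet G₂ x s ∧
  ∀ a b : V, a ∈ ballSet G₁ x s → b ∈ ballSet G₁ x s → (G₁.Adj a b ↔ G₂.Adj a b)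

/-- The number of eigenvalues (roots of the characteristic polynomial, with multiplicity)
of `M` that are at most `lam`. -/
def specCount {ι : Type*} [Fintype ι] [DecidableEq ι] (M : Matrix ι ι ℝ) (lam : ℝ) : ℝ :=
  ((M.charpoly.roots.filter (fun x => x ≤ lam)).card : ℝ)

/-- The compression `p_n Δ i_n` of the Laplacian of `G` to a finite set `s`. -/
def lapCompress [DecidableEq V] (G : SimpleGraph V) (s : Finset V) : Matrix s s ℝ :=
  Matrix.of fun x y : s =>
    (if (x : V) = (y : V) then ((G.neighborSet (x : V)).ncard : ℝ) else 0) -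
      (if G.Adj (x : V) (y : V) then 1 else 0)

/-- The intrinsic Laplacian of the subgraph induced on a finite set `s`. -/
def lapInduced [DecidableEq V] (G : SimpleGraph V) (s : Finset V) : Matrix s s ℝ :=
  Matrix.of fun x y : s =>
    (if (x : V) = (y : V) then ((G.neighborSet (x : V) ∩ (s : Set V)).ncard : ℝ) else 0) -
      (if G.Adj (x : V) (y : V) then 1 else 0)



/-- walks stay in adjacency-closed sets -/
lemma reach_mem {H : SimpleGraph V} {A : Set V}
    (hA : ∀ a b, a ∈ A → H.Adj a b → b ∈ A) {x y : V} (hx : x ∈ A)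
    (h : H.Reachable x y) : y ∈ A := by
  obtain ⟨w⟩ := h
  induction w with
  | nil => exact hx
  | cons h p ih => exact ih (hA _ _ hx h)

lemma reach_class_eq_of_isolated {H : SimpleGraph V} {x : V}
    (hx : ∀ y, ¬ H.Adj x y) : {y | H.Reachable x y} = {x} := by
  ext y
  simp only [Set.mem_setOf_eq, Set.mem_singleton_iff]
  constructor
  · intro h
    obtain ⟨w⟩ := h
    cases w with
    | nil => rfl
    | cons h p => exact absurd h (hx _)
  · rintro rfl; exact SimpleGraph.Reachable.refl _

lemma ball_mono_radius (G : SimpleGraph V) (x : V) {r s : ℕ} (h : r ≤ s) :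
    ballSet G x r ⊆ ballSet G x s := fun v hv => ⟨hv.1, hv.2.trans h⟩

lemma ball_mono_graph {H G : SimpleGraph V} (h : H ≤ G) (x : V) (r : ℕ) :
    ballSet H x r ⊆ ballSet G x r := by
  rintro v ⟨hr, hd⟩
  refine ⟨hr.mono h, ?_⟩
  obtain ⟨p, hp⟩ := hr.exists_walk_length_eq_dist
  calc G.dist x v ≤ (p.mapLe h).length := SimpleGraph.dist_le _
    _ = H.dist x v := by rw [SimpleGraph.Walk.length_map]; exact hp
    _ ≤ r := hd

lemma ball_zero (G : SimpleGraph V) (x : V) : ballSet G x 0 = {x} := by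
  ext v
  simp only [ballSet, Set.mem_setOf_eq, Set.mem_singleton_iff, Nat.le_zero]
  constructor
  · rintro ⟨hr, hd⟩
    exact (SimpleGraph.Reachable.dist_eq_zero_iff hr).mp hd |>.symm
  · rintro rfl; exact ⟨SimpleGraph.Reachable.refl _, by simp⟩

lemma adj_ball_succ {G : SimpleGraph V} {x a b : V} {r : ℕ}
    (ha : a ∈ ballSet G x r) (hab : G.Adj a b) : b ∈ ballSet G x (r + 1) := by
  obtain ⟨hr, hd⟩ := ha
  refine ⟨hr.trans hab.reachable, ?_⟩
  obtain ⟨p, hp⟩ := hr.exists_walk_length_eq_dist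
  calc G.dist x b ≤ (p.concat hab).length := SimpleGraph.dist_le _
    _ = G.dist x a + 1 := by rw [SimpleGraph.Walk.length_concat, hp]
    _ ≤ r + 1 := by omega

lemma inducedOn_le (G : SimpleGraph V) (s : Set V) : inducedOn G s ≤ G :=
  fun _ _ h => h.1

lemma exists_good_radius (g : ℕ → ℝ) (δ : ℝ) (hδ : 0 < δ) (R : ℕ)
    (h0 : 1 ≤ g 0) (hR : g R < (1 + δ) ^ R) :
    ∃ r < R, g (r + 1) ≤ (1 + δ) * g r := by
  by_contra h
  push_neg at h
  have key : ∀ r ≤ R, (1 + δ) ^ r ≤ g r := by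
    intro r hr
    induction r with
    | zero => simpa using h0
    | succ k ih =>
      have hk := ih (by omega)
      have hlt := h k (by omega)
      have hpos : (0:ℝ) < 1 + δ := by linarith
      calc (1 + δ) ^ (k + 1) = (1 + δ) ^ k * (1 + δ) := pow_succ _ _
        _ ≤ g k * (1 + δ) := mul_le_mul_of_nonneg_right hk hpos.le
        _ = (1 + δ) * g k := mul_comm _ _
        _ ≤ g (k + 1) := hlt.le
  linarith [key R le_rfl]

/-- The main combinatorial core: greedy removal of small-boundary balls. -/
lemma core {V : Type*} [Fintype V] (f : ℕ → ℕ)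
    (G : SimpleGraph V)
    (hg : ∀ (x : V) (r : ℕ), 1 ≤ r → Nat.card (ballSet G x r) ≤ f r)
    (K R : ℕ) (hK1 : 1 ≤ K) (hR : 1 ≤ R) (hfK : f R ≤ K)
    (δ : ℝ) (hδ : 0 < δ) (hfR : (f R : ℝ) < (1 + δ) ^ R) :
    ∀ (n : ℕ) (s : Set V), s.ncard ≤ n →
      ∃ T : Set V, T ⊆ s ∧ (T.ncard : ℝ) ≤ δ * s.ncard ∧
        smallComps (inducedOn G (s \ T)) K := by
  intro n
  induction n using Nat.strong_induction_on with
  | _ n IH =>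
  intro s hs
  rcases Set.eq_empty_or_nonempty s with hse | ⟨x₀, hx₀⟩
  · refine ⟨∅, by simp, by simp [mul_nonneg hδ.le (Nat.cast_nonneg _)], ?_⟩
    intro x
    have hiso : ∀ y, ¬ (inducedOn G (s \ ∅)).Adj x y := by
      intro y hy
      have := hy.2.1
      simp [hse] at this
    rw [reach_class_eq_of_isolated hiso]
    simpa using hK1
  · set H := inducedOn G s with hH
    have hballs : ∀ r : ℕ, ballSet H x₀ r ⊆ s := by
      intro r v hv
      refine reach_mem (H := H) (A := s) ?_ hx₀ hv.1
      intro a b _ hab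
      exact hab.2.2
    have hballG : ∀ r : ℕ, ballSet H x₀ r ⊆ ballSet G x₀ r :=
      ball_mono_graph (inducedOn_le G s) x₀
    have hcardball : ∀ r : ℕ, 1 ≤ r → ((ballSet H x₀ r).ncard : ℝ) ≤ f r := by
      intro r hr
      have h1 : (ballSet H x₀ r).ncard ≤ (ballSet G x₀ r).ncard :=
        Set.ncard_le_ncard (hballG r) (Set.toFinite _)
      have h2 : (ballSet G x₀ r).ncard ≤ f r := by
        rw [← Nat.card_coe_set_eq]; exact hg x₀ r hr
      exact_mod_cast h1.trans h2
    have h0 : (1:ℝ) ≤ ((ballSet H x₀ 0).ncard : ℝ) := by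
      rw [ball_zero]; simp
    have hRb : ((ballSet H x₀ R).ncard : ℝ) < (1 + δ) ^ R :=
      lt_of_le_of_lt (hcardball R hR) hfR
    obtain ⟨r, hrR, hratio⟩ :=
      exists_good_radius (fun r => ((ballSet H x₀ r).ncard : ℝ)) δ hδ R h0 hRb
    set B : Set V := ballSet H x₀ r with hB
    set B' : Set V := ballSet H x₀ (r + 1) with hB'
    have hBB' : B ⊆ B' := ball_mono_radius H x₀ (by omega)
    have hB's : B' ⊆ s := hballs (r + 1)
    set s' : Set V := s \ B' with hs'
    have hx₀B : x₀ ∈ B := ⟨SimpleGraph.Reachable.refl _, by simp [SimpleGraph.dist_self]⟩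
    have hx₀B' : x₀ ∈ B' := hBB' hx₀B
    have hs'lt : s'.ncard < s.ncard := by
      refine Set.ncard_lt_ncard ?_ (Set.toFinite _)
      exact ⟨Set.diff_subset, fun hsub => (hsub (hB's hx₀B') |>.2) hx₀B'⟩
    obtain ⟨T', hT'sub, hT'card, hT'small⟩ :=
      IH s'.ncard (by omega) s' le_rfl
    set S : Set V := B' \ B with hS
    set T : Set V := S ∪ T' with hT
    have hsplit : s \ T = B ∪ (s' \ T') := by
      ext y
      simp only [hT, hS, hs', Set.mem_diff, Set.mem_union]
      constructor
      · rintro ⟨hys, hyT⟩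
        push_neg at hyT
        by_cases hyB' : y ∈ B'
        · exact Or.inl (hyT.1 hyB')
        · exact Or.inr ⟨⟨hys, hyB'⟩, hyT.2⟩
      · rintro (hyB | ⟨⟨hys, hyB'⟩, hyT'⟩)
        · refine ⟨hB's (hBB' hyB), ?_⟩
          rintro (⟨_, hnB⟩ | hyT0)
          · exact hnB hyB
          · exact (hT'sub hyT0).2 (hBB' hyB)
        · exact ⟨hys, by rintro (⟨hB'0, _⟩ | h); exacts [hyB' hB'0, hyT' h]⟩
    refine ⟨T, ?_, ?_, ?_⟩
    · exact Set.union_subset ((Set.diff_subset).trans hB's) (hT'sub.trans Set.diff_subset)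
    · have hcard1 : (B' \ B).ncard + B.ncard = B'.ncard :=
        Set.ncard_diff_add_ncard_of_subset hBB' (Set.toFinite _)
      have hcard2 : (s \ B').ncard + B'.ncard = s.ncard :=
        Set.ncard_diff_add_ncard_of_subset hB's (Set.toFinite _)
      have hBle : (B.ncard : ℝ) ≤ B'.ncard := by
        exact_mod_cast Set.ncard_le_ncard hBB' (Set.toFinite _)
      have hU : ((T).ncard : ℝ) ≤ (S.ncard : ℝ) + T'.ncard := by
        exact_mod_cast Set.ncard_union_le S T'
      have hc1 : ((B' \ B).ncard : ℝ) + B.ncard = B'.ncard := by exact_mod_cast hcard1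
      have hc2 : ((s').ncard : ℝ) + B'.ncard = s.ncard := by exact_mod_cast hcard2
      have hSle : (S.ncard : ℝ) ≤ δ * B.ncard := by
        have hr' : ((ballSet H x₀ (r+1)).ncard : ℝ) ≤ (1 + δ) * (ballSet H x₀ r).ncard :=
          hratio
        rw [← hB, ← hB'] at hr'
        have : (S.ncard : ℝ) = (B'.ncard : ℝ) - B.ncard := by rw [hS]; linarith [hc1]
        linarith
      have hT'0 : (T'.ncard : ℝ) ≤ δ * s'.ncard := hT'card
      calc ((T).ncard : ℝ) ≤ (S.ncard : ℝ) + T'.ncard := hU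
        _ ≤ δ * B.ncard + δ * s'.ncard := by linarith
        _ ≤ δ * B'.ncard + δ * s'.ncard := by nlinarith
        _ = δ * s.ncard := by rw [← hc2]; ring
    · -- small components
      have fact1 : ∀ a b, a ∈ B → (inducedOn G (s \ T)).Adj a b → b ∈ B := by
        intro a b haB hab
        have hbs : b ∈ s \ T := hab.2.2
        have hHadj : H.Adj a b := ⟨hab.1, hB's (hBB' haB), hbs.1⟩
        have hbB' : b ∈ B' := adj_ball_succ haB hHadj
        rw [hsplit] at hbs
        rcases hbs with h | h
        · exact h
        · exact absurd hbB' (fun hc => h.1.2 hc)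
      intro x
      by_cases hxmem : x ∈ s \ T
      · rw [hsplit] at hxmem
        rcases hxmem with hxB | hxs'
        · have hsub : {y | (inducedOn G (s \ T)).Reachable x y} ⊆ B :=
            fun y hy => reach_mem fact1 hxB hy
          have h1 : Nat.card {y | (inducedOn G (s \ T)).Reachable x y} ≤ B.ncard := by
            rw [Nat.card_coe_set_eq]
            exact Set.ncard_le_ncard hsub (Set.toFinite _)
          have h2 : B.ncard ≤ f R := by
            have hBR : B ⊆ ballSet G x₀ R :=
              (ball_mono_radius H x₀ (by omega : r ≤ R)).trans (hballG R)
            have h4 := Set.ncard_le_ncard hBR (Set.toFinite _)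
            have h3 : (ballSet G x₀ R).ncard ≤ f R := by
              rw [← Nat.card_coe_set_eq]; exact hg x₀ R hR
            omega
          omega
        · have hclosed' : ∀ a b, a ∈ s' \ T' → (inducedOn G (s' \ T')).Adj a b →
              b ∈ s' \ T' := fun a b _ hab => hab.2.2
          have hclosed : ∀ a b, a ∈ s' \ T' → (inducedOn G (s \ T)).Adj a b →
              b ∈ s' \ T' := by
            intro a b ha hab
            have hbs : b ∈ s \ T := hab.2.2
            rw [hsplit] at hbs
            rcases hbs with hbB | hb
            · exact absurd (hBB' (fact1 b a hbB ⟨hab.1.symm, hab.2.2, hab.2.1⟩))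
                (ha.1).2
            · exact hb
          have hsub : {y | (inducedOn G (s \ T)).Reachable x y} ⊆
              {y | (inducedOn G (s' \ T')).Reachable x y} := by
            intro y hy
            refine reach_mem (A := {y | (inducedOn G (s' \ T')).Reachable x y}) ?_
              (SimpleGraph.Reachable.refl _) hy
            intro a b ha hab
            have haS : a ∈ s' \ T' := reach_mem hclosed' hxs' ha
            have hbS : b ∈ s' \ T' := hclosed a b haS hab
            exact SimpleGraph.Reachable.trans ha
              (SimpleGraph.Adj.reachable ⟨hab.1, haS, hbS⟩)
          have h1 : Nat.card {y | (inducedOn G (s \ T)).Reachable x y} ≤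
              Nat.card {y | (inducedOn G (s' \ T')).Reachable x y} := by
            rw [Nat.card_coe_set_eq, Nat.card_coe_set_eq]
            exact Set.ncard_le_ncard hsub (Set.toFinite _)
          exact h1.trans (hT'small x)
      · have hiso : ∀ y, ¬ (inducedOn G (s \ T)).Adj x y := fun y hy => hxmem hy.2.1
        rw [reach_class_eq_of_isolated hiso]
        simpa using hK1


lemma card_ball_comap {W : Type*} [Finite W] (G : SimpleGraph W) (P : W → Prop)
    (x : {w // P w}) (r : ℕ) :
    Nat.card (ballSet (SimpleGraph.comap (Subtype.val : {w // P w} → W) G) x r) ≤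
      Nat.card (ballSet G (x : W) r) := by
  set G' := SimpleGraph.comap (Subtype.val : {w // P w} → W) G with hG'
  have walk_transfer : ∀ (a b : {w // P w}) (p : G'.Walk a b),
      ∃ q : G.Walk (a : W) (b : W), q.length = p.length := by
    intro a b p
    induction p with
    | nil => exact ⟨SimpleGraph.Walk.nil, rfl⟩
    | cons h p ih =>
      obtain ⟨q, hq⟩ := ih
      exact ⟨SimpleGraph.Walk.cons (show G.Adj _ _ from h) q, by simp [hq]⟩
  have hmem : ∀ y : {w // P w}, y ∈ ballSet G' x r → (y : W) ∈ ballSet G (x : W) r := by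
    rintro y ⟨hr', hd⟩
    obtain ⟨p, hp⟩ := hr'.exists_walk_length_eq_dist
    obtain ⟨q, hq⟩ := walk_transfer x y p
    refine ⟨⟨q⟩, ?_⟩
    calc G.dist (x : W) (y : W) ≤ q.length := SimpleGraph.dist_le _
      _ = G'.dist x y := by rw [hq, hp]
      _ ≤ r := hd
  refine Nat.card_le_card_of_injective
    (fun y => (⟨(y : {w // P w}), hmem y y.2⟩ : ballSet G (x : W) r)) ?_
  intro a b hab
  have h1 := congrArg Subtype.val hab
  exact Subtype.ext (Subtype.ext h1)

/-- subexponential growth with bounded degrees implies hyperfiniteness, and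
consequently such graph sequences are antiexpanders. -/
theorem antiexpander_of_subexp (f : ℕ → ℕ) (hmono : Monotone f)
    (hsub : ∀ β : ℝ, 0 < β → ∃ R : ℕ, ∀ r : ℕ, R ≤ r → (f r : ℝ) ≤ Real.exp (β * r))
    (d : ℕ) (ε : ℝ) (hε : 0 < ε) :
    (∃ K : ℕ, 0 < K ∧ ∀ (V : Type) [Fintype V] (G : SimpleGraph V), degBound G d →
      (∀ (x : V) (r : ℕ), 1 ≤ r → Nat.card (ballSet G x r) ≤ f r) →
      ∃ T : Set V, (Nat.card T : ℝ) ≤ ε * (Fintype.card V : ℝ) ∧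
        smallComps (inducedOn G Tᶜ) K) ∧
    (∀ (V : ℕ → Type) [∀ n, Fintype (V n)] (G : ∀ n, SimpleGraph (V n)),
      (∀ n, degBound (G n) d) →
      (∀ n (x : V n) (r : ℕ), 1 ≤ r → Nat.card (ballSet (G n) x r) ≤ f r) →
      ∀ ε' : ℝ, 0 < ε' → ∃ K' : ℕ, 0 < K' ∧ ∀ n, ∃ F : Set (Sym2 (V n)),
        F ⊆ (G n).edgeSet ∧ (Nat.card F : ℝ) ≤ ε' * (Nat.card (G n).edgeSet : ℝ) ∧
        smallComps ((G n).deleteEdges F) K') := by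
  have main : ∀ ε0 : ℝ, 0 < ε0 → ∃ K : ℕ, 0 < K ∧
      ∀ (V : Type) [Fintype V] (G : SimpleGraph V), degBound G d →
      (∀ (x : V) (r : ℕ), 1 ≤ r → Nat.card (ballSet G x r) ≤ f r) →
      ∃ T : Set V, (Nat.card T : ℝ) ≤ ε0 * (Fintype.card V : ℝ) ∧
        smallComps (inducedOn G Tᶜ) K := by
    intro ε0 hε0
    have h1ε : (1:ℝ) < 1 + ε0 := by linarith
    have hL : 0 < Real.log (1 + ε0) := Real.log_pos h1ε
    obtain ⟨R₀, hR₀⟩ := hsub (Real.log (1 + ε0) / 2) (by linarith)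
    set R := max R₀ 1 with hRdef
    have hR1 : 1 ≤ R := le_max_right _ _
    have hfR : (f R : ℝ) < (1 + ε0) ^ R := by
      have h2 : (f R : ℝ) ≤ Real.exp (Real.log (1 + ε0) / 2 * R) := hR₀ R (le_max_left _ _)
      have h3 : Real.exp (Real.log (1 + ε0) / 2 * R) < Real.exp (R * Real.log (1 + ε0)) := by
        apply Real.exp_lt_exp.mpr
        have hRr : (1:ℝ) ≤ (R:ℝ) := by exact_mod_cast hR1
        nlinarith [mul_pos hL (lt_of_lt_of_le zero_lt_one hRr)]
      have h4 : Real.exp ((R:ℝ) * Real.log (1 + ε0)) = (1 + ε0) ^ R := by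
        rw [Real.exp_nat_mul, Real.exp_log (by linarith)]
      rw [h4] at h3
      linarith
    refine ⟨max (f R) 1, by omega, ?_⟩
    intro V _ G hdeg hgrow
    obtain ⟨T, hTsub, hTcard, hTsmall⟩ :=
      core f G hgrow (max (f R) 1) R (le_max_right _ _) hR1 (le_max_left _ _)
        ε0 hε0 hfR (Fintype.card V) Set.univ
        (by rw [Set.ncard_univ, Nat.card_eq_fintype_card])
    refine ⟨T, ?_, ?_⟩
    · rw [Nat.card_coe_set_eq]
      calc (T.ncard : ℝ) ≤ ε0 * ((Set.univ : Set V).ncard : ℝ) := hTcard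
        _ = ε0 * (Fintype.card V : ℝ) := by rw [Set.ncard_univ, Nat.card_eq_fintype_card]
    · rwa [Set.compl_eq_univ_diff]
  constructor
  · exact main ε hε
  · intro V _ G hdeg hgrow ε' hε'
    have hd1 : (0:ℝ) < (d:ℝ) + 1 := by positivity
    set ε'' : ℝ := ε' / (2 * ((d:ℝ) + 1)) with hε''def
    have hε''pos : 0 < ε'' := by positivity
    obtain ⟨K, hK, hmain⟩ := main ε'' hε''pos
    refine ⟨K, hK, ?_⟩
    intro n
    set P : V n → Prop := fun v => ∃ u, (G n).Adj v u with hP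
    set G' : SimpleGraph {v // P v} :=
      SimpleGraph.comap (Subtype.val : {v // P v} → V n) (G n) with hG'
    haveI : Fintype {v // P v} := Fintype.ofFinite _
    have hdeg' : degBound G' d := by
      intro v
      refine le_trans
        (Set.ncard_le_ncard_of_injOn Subtype.val ?_ Subtype.val_injective.injOn
          (Set.toFinite _)) (hdeg n v.val)
      intro u hu
      exact hu
    have hgrow' : ∀ (x : {v // P v}) (r : ℕ), 1 ≤ r → Nat.card (ballSet G' x r) ≤ f r :=
      fun x r hr => le_trans (card_ball_comap (G n) P x r) (hgrow n x.val r hr)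
    obtain ⟨T, hTcard, hTsmall⟩ := hmain {v // P v} G' hdeg' hgrow'
    set T₀ : Set (V n) := Subtype.val '' T with hT₀
    set F : Set (Sym2 (V n)) := {e | e ∈ (G n).edgeSet ∧ ∃ v ∈ T₀, v ∈ e} with hF
    have hFsub : F ⊆ (G n).edgeSet := fun e he => he.1
    have hFadj : ∀ a b : V n, (G n).Adj a b → (s(a, b) ∈ F ↔ a ∈ T₀ ∨ b ∈ T₀) := by
      intro a b hab
      constructor
      · rintro ⟨-, v, hvT, hve⟩
        rcases Sym2.mem_iff.mp hve with rfl | rfl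
        · exact Or.inl hvT
        · exact Or.inr hvT
      · rintro (h | h)
        · exact ⟨(G n).mem_edgeSet.mpr hab, a, h, Sym2.mem_iff.mpr (Or.inl rfl)⟩
        · exact ⟨(G n).mem_edgeSet.mpr hab, b, h, Sym2.mem_iff.mpr (Or.inr rfl)⟩
    refine ⟨F, hFsub, ?_, ?_⟩
    · -- edge cardinality bound
      haveI : Fintype T₀ := Fintype.ofFinite _
      haveI : ∀ v : V n, Fintype ((G n).neighborSet v) := fun v => Fintype.ofFinite _
      haveI : Fintype (G n).edgeSet := Fintype.ofFinite _
      have hrec : ∀ e : F, ∃ (v : T₀) (u : ((G n).neighborSet (v : V n))),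
          (e : Sym2 (V n)) = s((v : V n), (u : V n)) := by
        rintro ⟨e, he, v, hvT, hve⟩
        refine ⟨⟨v, hvT⟩, ⟨Sym2.Mem.other hve, ?_⟩, (Sym2.other_spec hve).symm⟩
        rw [SimpleGraph.mem_neighborSet, ← SimpleGraph.mem_edgeSet, Sym2.other_spec hve]
        exact he
      choose Φ₁ Φ₂ hΦ using hrec
      have hinj : Nat.card F ≤ Nat.card ((v : T₀) × ((G n).neighborSet (v : V n))) := by
        refine Nat.card_le_card_of_injective (fun e => ⟨Φ₁ e, Φ₂ e⟩) ?_
        intro e₁ e₂ h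
        have h' := congrArg
          (fun p : (v : T₀) × ((G n).neighborSet (v : V n)) =>
            s(((p.1 : V n)), ((p.2 : V n)))) h
        apply Subtype.ext
        rw [hΦ e₁, hΦ e₂]
        exact h'
      have hsig : Nat.card ((v : T₀) × ((G n).neighborSet (v : V n))) ≤ Nat.card T₀ * d := by
        rw [Nat.card_eq_fintype_card, Fintype.card_sigma]
        calc ∑ v : T₀, Fintype.card ((G n).neighborSet (v : V n))
            ≤ Finset.univ.card • d := by
              refine Finset.sum_le_card_nsmul _ _ d ?_
              intro v _
              have hv := hdeg n (v : V n)
              rwa [← Nat.card_coe_set_eq, Nat.card_eq_fintype_card] at hv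
          _ = Fintype.card T₀ * d := by rw [Finset.card_univ, smul_eq_mul]
          _ = Nat.card T₀ * d := by rw [Nat.card_eq_fintype_card]
      have hT₀T : Nat.card T₀ = Nat.card T := by
        rw [Nat.card_coe_set_eq, Nat.card_coe_set_eq, hT₀,
          Set.ncard_image_of_injective _ Subtype.val_injective]
      have hψ : ∀ v : {v // P v}, s((v : V n), v.prop.choose) ∈ (G n).edgeSet :=
        fun v => (G n).mem_edgeSet.mpr v.prop.choose_spec
      set ψ : {v // P v} → (G n).edgeSet := fun v => ⟨_, hψ v⟩ with hψdef
      have hVE : Nat.card {v // P v} ≤ 2 * Nat.card (G n).edgeSet := by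
        have hfib : ∀ b ∈ Finset.univ.image ψ,
            (Finset.univ.filter (fun a => ψ a = b)).card ≤ 2 := by
          rintro ⟨e, he⟩ -
          revert he
          induction e using Sym2.ind with
          | _ x y =>
            intro he
            refine le_trans
              (Finset.card_le_card_of_injOn (t := ({x, y} : Finset (V n))) Subtype.val
                ?_ Subtype.val_injective.injOn) ?_
            · intro v hv
              have hv2 := (Finset.mem_filter.mp hv).2
              have hv3 : (v : V n) ∈ ((ψ v : (G n).edgeSet) : Sym2 (V n)) :=
                Sym2.mem_iff.mpr (Or.inl rfl)
              rw [hv2] at hv3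
              simp only [Finset.coe_insert, Set.mem_insert_iff, Finset.coe_singleton,
                Set.mem_singleton_iff, Finset.mem_insert, Finset.mem_singleton]
              exact Sym2.mem_iff.mp hv3
            · exact (Finset.card_insert_le _ _).trans (by simp)
        have h1 := Finset.card_le_mul_card_image (f := ψ) Finset.univ 2 hfib
        calc Nat.card {v // P v} = Finset.univ.card := by
              rw [Nat.card_eq_fintype_card, Finset.card_univ]
          _ ≤ 2 * (Finset.univ.image ψ).card := h1
          _ ≤ 2 * Finset.univ.card := by
              gcongr
              exact Finset.subset_univ _
          _ = 2 * Nat.card (G n).edgeSet := by rw [Finset.card_univ, Nat.card_eq_fintype_card]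
      -- put the numbers together
      have hFn : Nat.card F ≤ Nat.card T * d := by
        have h := hinj.trans hsig
        rwa [hT₀T] at h
      have hFb : (Nat.card F : ℝ) ≤ (Nat.card T : ℝ) * d := by exact_mod_cast hFn
      have h2E : ((Fintype.card {v // P v} : ℝ)) ≤ 2 * (Nat.card (G n).edgeSet : ℝ) := by
        have : (Nat.card {v // P v} : ℝ) ≤ 2 * (Nat.card (G n).edgeSet : ℝ) := by
          exact_mod_cast hVE
        rwa [Nat.card_eq_fintype_card] at this
      have hident : ε'' * (2 * ((d:ℝ) + 1)) = ε' := by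
        rw [hε''def]
        field_simp
      have hEnn : (0:ℝ) ≤ (Nat.card (G n).edgeSet : ℝ) := Nat.cast_nonneg _
      have h5 : (Nat.card T : ℝ) * d ≤ ε'' * (Fintype.card {v // P v}) * d :=
        mul_le_mul_of_nonneg_right hTcard (Nat.cast_nonneg d)
      have h6 : ε'' * (Fintype.card {v // P v}) * d ≤ ε'' * (2 * (Nat.card (G n).edgeSet : ℝ)) * d :=
        mul_le_mul_of_nonneg_right (mul_le_mul_of_nonneg_left h2E hε''pos.le) (Nat.cast_nonneg d)
      have h7 : ε'' * (2 * (Nat.card (G n).edgeSet : ℝ)) * d ≤ ε' * (Nat.card (G n).edgeSet : ℝ) := by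
        nlinarith [mul_nonneg hε''pos.le hEnn]
      linarith
    · -- small components of the edge-deleted graph
      intro x
      by_cases hxP : P x
      · by_cases hxT : x ∈ T₀
        · have hiso : ∀ y, ¬ ((G n).deleteEdges F).Adj x y := by
            intro y hy
            obtain ⟨hG, hnF⟩ := SimpleGraph.deleteEdges_adj.mp hy
            exact hnF ((hFadj x y hG).mpr (Or.inl hxT))
          rw [reach_class_eq_of_isolated hiso]
          simpa [Nat.pos_iff_ne_zero, Nat.one_le_iff_ne_zero] using hK
        · set A : Set (V n) :=
            {y | ∃ h : P y, y ∉ T₀ ∧ (inducedOn G' Tᶜ).Reachable ⟨x, hxP⟩ ⟨y, h⟩} with hA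
          have hxA : x ∈ A := ⟨hxP, hxT, SimpleGraph.Reachable.refl _⟩
          have hclosure : ∀ a b, a ∈ A → ((G n).deleteEdges F).Adj a b → b ∈ A := by
            intro a b ha hab
            obtain ⟨haP, haT, haR⟩ := ha
            obtain ⟨hG, hnF⟩ := SimpleGraph.deleteEdges_adj.mp hab
            have hbT : b ∉ T₀ := fun h => hnF ((hFadj a b hG).mpr (Or.inr h))
            have hbP : P b := ⟨a, hG.symm⟩
            have hadj : (inducedOn G' Tᶜ).Adj ⟨a, haP⟩ ⟨b, hbP⟩ := by
              refine ⟨hG, ?_, ?_⟩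
              · intro hmem
                exact haT ⟨⟨a, haP⟩, hmem, rfl⟩
              · intro hmem
                exact hbT ⟨⟨b, hbP⟩, hmem, rfl⟩
            exact ⟨hbP, hbT, haR.trans hadj.reachable⟩
          have hsubA : {y | ((G n).deleteEdges F).Reachable x y} ⊆ A :=
            fun y hy => reach_mem hclosure hxA hy
          have hinj2 : Nat.card {y | ((G n).deleteEdges F).Reachable x y} ≤
              Nat.card {z : {v // P v} | (inducedOn G' Tᶜ).Reachable ⟨x, hxP⟩ z} := by
            refine Nat.card_le_card_of_injective (fun y =>
              ⟨⟨(y : V n), (hsubA y.2).choose⟩, (hsubA y.2).choose_spec.2⟩) ?_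
            intro a b hab
            have h1 := congrArg
              (fun z : {z : {v // P v} | (inducedOn G' Tᶜ).Reachable ⟨x, hxP⟩ z} =>
                ((z : {v // P v}) : V n)) hab
            exact Subtype.ext h1
          exact hinj2.trans (hTsmall ⟨x, hxP⟩)
      · have hiso : ∀ y, ¬ ((G n).deleteEdges F).Adj x y := by
          intro y hy
          exact hxP ⟨y, (SimpleGraph.deleteEdges_adj.mp hy).1⟩
        rw [reach_class_eq_of_isolated hiso]
        simpa [Nat.pos_iff_ne_zero, Nat.one_le_iff_ne_zero] using hK


end GraphPaper
end
end

section
/- Let G₁, G₂ be finite graphs on a common vertex set V with degree bound d, and let A₁, A₂: V × V → ℝ be kernels such that A_i(x,y) = 0 if d_{G_i}(x,y) > s, and such that A₁(x,·) = A₂(x,·) for every vertex x whose s-ball in G₁ equals its s-ball in G₂ (as labeled subgraphs with the kernel values). Let W be the set of vertices whose star in G₁ differs from their star in G₂, and suppose |W| ≤ (ε/C)|V| where C is the maximal number of vertices of a ball of radius s in a graph of degree bound d. Then rank(A₁ − A₂) ≤ ε|V|. -/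
open scoped Classical

noncomputable section

namespace GraphPaper

open Filter

variable {V W : Type*}

lemma mem_ballSet_iff {V : Type*} (G : SimpleGraph V) (x v : V) (r : ℕ) :
    v ∈ ballSet G x r ↔ ∃ p : G.Walk x v, p.length ≤ r := by
  constructor
  · rintro ⟨hr, hd⟩
    obtain ⟨p, hp⟩ := hr.exists_walk_length_eq_dist
    exact ⟨p, hp ▸ hd⟩
  · rintro ⟨p, hp⟩
    exact ⟨⟨p⟩, le_trans (SimpleGraph.dist_le p) hp⟩

lemma star_adj {V : Type*} {G₁ G₂ : SimpleGraph V} {y : V}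
    (h : graphStar G₁ y = graphStar G₂ y) (b : V) : G₁.Adj y b ↔ G₂.Adj y b := by
  constructor
  · intro hb
    have : (graphStar G₂ y).Adj y b := h ▸ (⟨hb, Or.inl rfl⟩ : (graphStar G₁ y).Adj y b)
    exact this.1
  · intro hb
    have : (graphStar G₁ y).Adj y b := h.symm ▸ (⟨hb, Or.inl rfl⟩ : (graphStar G₂ y).Adj y b)
    exact this.1

lemma walk_transfer₂ {V : Type*} (G₁ G₂ : SimpleGraph V) :
    ∀ n (x : V), (∀ y ∈ ballSet G₁ x n, graphStar G₁ y = graphStar G₂ y) →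
    ∀ (v : V) (p : G₂.Walk x v), p.length ≤ n → ∃ q : G₁.Walk x v, q.length ≤ n := by
  intro n
  induction n with
  | zero =>
    intro x _ v p hp
    cases p with
    | nil => exact ⟨SimpleGraph.Walk.nil, le_refl _⟩
    | cons h q => simp [SimpleGraph.Walk.length_cons] at hp
  | succ n ih =>
    intro x hx v p hp
    cases p with
    | nil => exact ⟨SimpleGraph.Walk.nil, by simp⟩
    | @cons _ b _ h q =>
      have hxstar := hx x (root_mem _ _ _)
      have hadj : G₁.Adj x b := (star_adj hxstar b).mpr h
      have hb : ∀ y ∈ ballSet G₁ b n, graphStar G₁ y = graphStar G₂ y := by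
        intro y hy
        apply hx
        rw [mem_ballSet_iff] at hy ⊢
        obtain ⟨w, hw⟩ := hy
        exact ⟨SimpleGraph.Walk.cons hadj w, by simpa using Nat.succ_le_succ hw⟩
      simp only [SimpleGraph.Walk.length_cons] at hp
      obtain ⟨q', hq'⟩ := ih b hb v q (Nat.le_of_succ_le_succ hp)
      exact ⟨SimpleGraph.Walk.cons hadj q', by simpa using Nat.succ_le_succ hq'⟩

lemma walk_transfer₁ {V : Type*} (G₁ G₂ : SimpleGraph V) :
    ∀ n (x : V), (∀ y ∈ ballSet G₁ x n, graphStar G₁ y = graphStar G₂ y) →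
    ∀ (v : V) (p : G₁.Walk x v), p.length ≤ n → ∃ q : G₂.Walk x v, q.length ≤ n := by
  intro n
  induction n with
  | zero =>
    intro x _ v p hp
    cases p with
    | nil => exact ⟨SimpleGraph.Walk.nil, le_refl _⟩
    | cons h q => simp [SimpleGraph.Walk.length_cons] at hp
  | succ n ih =>
    intro x hx v p hp
    cases p with
    | nil => exact ⟨SimpleGraph.Walk.nil, by simp⟩
    | @cons _ b _ h q =>
      have hxstar := hx x (root_mem _ _ _)
      have hadj : G₂.Adj x b := (star_adj hxstar b).mp h
      have hb : ∀ y ∈ ballSet G₁ b n, graphStar G₁ y = graphStar G₂ y := by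
        intro y hy
        apply hx
        rw [mem_ballSet_iff] at hy ⊢
        obtain ⟨w, hw⟩ := hy
        exact ⟨SimpleGraph.Walk.cons h w, by simpa using Nat.succ_le_succ hw⟩
      simp only [SimpleGraph.Walk.length_cons] at hp
      obtain ⟨q', hq'⟩ := ih b hb v q (Nat.le_of_succ_le_succ hp)
      exact ⟨SimpleGraph.Walk.cons hadj q', by simpa using Nat.succ_le_succ hq'⟩

lemma sBallMatch_of_stars {V : Type*} (G₁ G₂ : SimpleGraph V) (s : ℕ) (x : V)
    (h : ∀ y ∈ ballSet G₁ x s, graphStar G₁ y = graphStar G₂ y) :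
    sBallMatch G₁ G₂ s x := by
  constructor
  · ext v
    rw [mem_ballSet_iff, mem_ballSet_iff]
    constructor
    · rintro ⟨p, hp⟩; exact walk_transfer₁ G₁ G₂ s x h v p hp
    · rintro ⟨p, hp⟩; exact walk_transfer₂ G₁ G₂ s x h v p hp
  · intro a b ha _
    exact star_adj (h a ha) b

/-- rank bound for the difference of two pattern-determined finite range
kernels in terms of the number of vertices whose stars differ. -/
theorem rank_bound_of_star_difference {V : Type} [Fintype V] [DecidableEq V]
    (d s C : ℕ) (ε : ℝ)
    (G₁ G₂ : SimpleGraph V) (h₁ : degBound G₁ d) (h₂ : degBound G₂ d)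
    (hC : ∀ (U : Type) (K : SimpleGraph U), degBound K d →
      ∀ x : U, Nat.card (ballSet K x s) ≤ C)
    (A₁ A₂ : Matrix V V ℝ)
    (hr₁ : ∀ x y, (¬ G₁.Reachable x y ∨ s < G₁.dist x y) → A₁ x y = 0)
    (hr₂ : ∀ x y, (¬ G₂.Reachable x y ∨ s < G₂.dist x y) → A₂ x y = 0)
    (hrow : ∀ x, sBallMatch G₁ G₂ s x → ∀ y, A₁ x y = A₂ x y)
    (hW : (Nat.card {y : V | graphStar G₁ y ≠ graphStar G₂ y} : ℝ) ≤
      (ε / (C : ℝ)) * (Fintype.card V : ℝ)) :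
    (((A₁ - A₂).rank : ℝ)) ≤ ε * (Fintype.card V : ℝ) := by
  classical
  set M := A₁ - A₂ with hM
  set D : Matrix V V ℝ :=
    Matrix.diagonal (fun x => if sBallMatch G₁ G₂ s x then (0:ℝ) else 1) with hD
  have hDM : D * M = M := by
    ext x y
    rw [hD, Matrix.diagonal_mul]
    by_cases hx : sBallMatch G₁ G₂ s x
    · simp [hx, hM, Matrix.sub_apply, hrow x hx y]
    · simp [hx]
  set badF : Finset V := Finset.univ.filter (fun x => ¬ sBallMatch G₁ G₂ s x) with hbadF
  have hrank : M.rank ≤ badF.card := by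
    calc M.rank = (D * M).rank := by rw [hDM]
    _ ≤ D.rank := Matrix.rank_mul_le_left D M
    _ = Fintype.card {x // ¬ sBallMatch G₁ G₂ s x} := by
        rw [hD, Matrix.rank_diagonal]
        exact Fintype.card_congr (Equiv.subtypeEquivRight fun x => by
          by_cases hx : sBallMatch G₁ G₂ s x <;> simp [hx])
    _ = badF.card := by rw [hbadF, Fintype.card_subtype]
  set Wf : Finset V := Finset.univ.filter (fun y => graphStar G₁ y ≠ graphStar G₂ y) with hWf
  have hWcard : (Nat.card {y : V | graphStar G₁ y ≠ graphStar G₂ y} : ℕ) = Wf.card := by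
    rw [Nat.card_eq_fintype_card, hWf, Fintype.card_subtype]
    congr 1
  have hsub : badF ⊆ Wf.biUnion (fun y => (ballSet G₁ y s).toFinset) := by
    intro x hx
    rw [hbadF, Finset.mem_filter] at hx
    have : ¬ ∀ y ∈ ballSet G₁ x s, graphStar G₁ y = graphStar G₂ y := by
      intro h; exact hx.2 (sBallMatch_of_stars G₁ G₂ s x h)
    push_neg at this
    obtain ⟨y, hy, hystar⟩ := this
    rw [Finset.mem_biUnion]
    refine ⟨y, by rw [hWf]; simp [hystar], ?_⟩
    rw [Set.mem_toFinset, mem_ballSet_iff]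
    rw [mem_ballSet_iff] at hy
    obtain ⟨p, hp⟩ := hy
    exact ⟨p.reverse, by simpa using hp⟩
  have hball : ∀ y : V, ((ballSet G₁ y s).toFinset.card) ≤ C := by
    intro y
    have := hC V G₁ h₁ y
    rwa [Nat.card_eq_card_toFinset] at this
  have hcount : badF.card ≤ Wf.card * C := by
    calc badF.card ≤ (Wf.biUnion (fun y => (ballSet G₁ y s).toFinset)).card :=
          Finset.card_le_card hsub
      _ ≤ ∑ y ∈ Wf, (ballSet G₁ y s).toFinset.card := Finset.card_biUnion_le
      _ ≤ ∑ y ∈ Wf, C := Finset.sum_le_sum (fun y _ => hball y)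
      _ = Wf.card * C := by rw [Finset.sum_const, smul_eq_mul]
  by_cases hV : Nonempty V
  · have hC1 : 1 ≤ C := by
      obtain ⟨x0⟩ := hV
      have h := hC V G₁ h₁ x0
      have : 0 < Nat.card (ballSet G₁ x0 s) := by
        have : (ballSet G₁ x0 s).Nonempty := ⟨x0, root_mem _ _ _⟩
        have hne : Nonempty (ballSet G₁ x0 s) := this.to_subtype
        exact Nat.card_pos
      omega
    have hCpos : (0:ℝ) < C := by exact_mod_cast hC1
    calc (M.rank : ℝ) ≤ (badF.card : ℝ) := by exact_mod_cast hrank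
      _ ≤ (Wf.card : ℝ) * C := by exact_mod_cast hcount
      _ ≤ ((ε / C) * (Fintype.card V : ℝ)) * C := by
          apply mul_le_mul_of_nonneg_right _ hCpos.le
          rw [← hWcard] at *
          exact_mod_cast hW
      _ = ε * (Fintype.card V : ℝ) := by field_simp
  · have hcard0 : Fintype.card V = 0 := by
      rw [Fintype.card_eq_zero_iff]; exact not_nonempty_iff.mp hV
    have hb0 : badF.card = 0 := by
      rw [Finset.card_eq_zero]
      apply Finset.eq_empty_of_forall_notMem
      intro x _; exact hV ⟨x⟩
    rw [hcard0]
    simp only [Nat.cast_zero, mul_zero]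
    have : M.rank = 0 := by omega
    simp [this]

end GraphPaper
end
end

section
/- Let G be an infinite connected graph with bounded vertex degrees, Δ its Laplacian, and {G_n} a Følner sequence of finite spanned subgraphs (|∂G_n|/|V(G_n)| → 0). Let p_n Δ i_n denote the compression of Δ to ℓ²(V(G_n)) (where i_n is inclusion and p_n projection), and Δ_{G_n} the intrinsic Laplacian of the subgraph G_n. Then rank(p_n Δ i_n − Δ_{G_n}) ≤ |∂G_n|; consequently the sup-distance between the normalized spectral distribution functions of p_n Δ i_n and Δ_{G_n} is at most |∂G_n|/|V(G_n)|, and in particular tends to 0. -/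
open scoped Classical

noncomputable section

namespace GraphPaper

open Filter

variable {V W : Type*}

section SpectralAux

open Finset Polynomial RealInnerProductSpace

theorem charpoly_conj_unit {ι : Type*} [Fintype ι] [DecidableEq ι]
    (U A : Matrix ι ι ℝ) (hU : U ∈ Matrix.unitaryGroup ι ℝ) :
    (U * A * star U).charpoly = A.charpoly := by
  have h1 : star U * U = 1 := Matrix.UnitaryGroup.star_mul_self ⟨U, hU⟩
  have h2 : U * star U = 1 := by
    rw [mul_eq_one_comm] at h1; exact h1
  have key : Matrix.charmatrix (U * A * star U) =
      (U.map C) * Matrix.charmatrix A * ((star U).map C) := by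
    have hUU : (U.map (C : ℝ →+* ℝ[X])) * ((star U).map C) = 1 := by
      rw [← Matrix.map_mul, h2]; simp
    rw [Matrix.charmatrix, Matrix.charmatrix, Matrix.mul_sub, Matrix.sub_mul]
    congr 1
    · rw [Matrix.scalar_apply, ← Matrix.smul_one_eq_diagonal, Matrix.mul_smul,
        Matrix.smul_mul, Matrix.mul_one, hUU, Matrix.smul_one_eq_diagonal]
    · simp [Matrix.map_mul, RingHom.mapMatrix_apply, Matrix.mul_assoc]
  rw [Matrix.charpoly, Matrix.charpoly, key, Matrix.det_mul, Matrix.det_mul]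
  have h3 : (U.map (C : ℝ →+* ℝ[X])).det * ((star U).map C).det = 1 := by
    rw [mul_comm, ← Matrix.det_mul, ← Matrix.map_mul, h1]; simp
  calc (U.map (C : ℝ →+* ℝ[X])).det * (Matrix.charmatrix A).det * ((star U).map C).det
      = (Matrix.charmatrix A).det
          * ((U.map (C : ℝ →+* ℝ[X])).det * ((star U).map C).det) := by ring
    _ = _ := by rw [h3, mul_one]

theorem charpoly_diag {ι : Type*} [Fintype ι] [DecidableEq ι] (d : ι → ℝ) :
    (Matrix.diagonal d).charpoly = ∏ i, (X - C (d i)) := by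
  rw [Matrix.charpoly, Matrix.charmatrix, Matrix.scalar_apply, RingHom.mapMatrix_apply,
    Matrix.diagonal_map (map_zero _), Matrix.diagonal_sub, Matrix.det_diagonal]

theorem charpoly_herm {ι : Type*} [Fintype ι] [DecidableEq ι]
    {A : Matrix ι ι ℝ} (hA : A.IsHermitian) :
    A.charpoly.roots = Finset.univ.val.map hA.eigenvalues := by
  have hd : A.charpoly = (Matrix.diagonal hA.eigenvalues).charpoly := by
    conv_lhs => rw [hA.spectral_theorem]
    have := charpoly_conj_unit (hA.eigenvectorUnitary : Matrix ι ι ℝ)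
      (Matrix.diagonal hA.eigenvalues) (hA.eigenvectorUnitary).2
    simpa using this
  rw [hd, charpoly_diag, Finset.prod_eq_multiset_prod,
    show (fun i => X - C (hA.eigenvalues i)) = (fun a => X - C a) ∘ hA.eigenvalues from rfl,
    ← Multiset.map_map, roots_multiset_prod_X_sub_C]

variable {ι : Type*} [Fintype ι] [DecidableEq ι]

section herm
variable {A : Matrix ι ι ℝ} (hA : A.IsHermitian)

theorem toEuclideanLin_eigvec (i : ι) :
    Matrix.toEuclideanLin A (hA.eigenvectorBasis i) = hA.eigenvalues i • hA.eigenvectorBasis i := by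
  ext j
  exact congrFun (hA.mulVec_eigenvectorBasis i) j

theorem repr_toEuclideanLin (x : EuclideanSpace ℝ ι) (i : ι) :
    hA.eigenvectorBasis.repr (Matrix.toEuclideanLin A x) i
      = hA.eigenvalues i * hA.eigenvectorBasis.repr x i := by
  rw [OrthonormalBasis.repr_apply_apply, OrthonormalBasis.repr_apply_apply,
    ← (Matrix.isHermitian_iff_isSymmetric.1 hA) (hA.eigenvectorBasis i) x,
    toEuclideanLin_eigvec hA, real_inner_smul_left]

theorem inner_eq_sum_repr (x y : EuclideanSpace ℝ ι) :
    ⟪x, y⟫ = ∑ i, hA.eigenvectorBasis.repr x i * hA.eigenvectorBasis.repr y i := by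
  rw [← hA.eigenvectorBasis.repr.inner_map_map x y, PiLp.inner_apply]
  simp [RCLike.inner_apply]
  exact Finset.sum_congr rfl fun i _ => mul_comm _ _

theorem qf_eq_sum (x : EuclideanSpace ℝ ι) :
    ⟪x, Matrix.toEuclideanLin A x⟫
      = ∑ i, hA.eigenvalues i * (hA.eigenvectorBasis.repr x i)^2 := by
  rw [inner_eq_sum_repr hA]
  refine Finset.sum_congr rfl fun i _ => ?_
  rw [repr_toEuclideanLin hA]
  ring

theorem repr_zero_of_mem_span (T : Finset ι) {x : EuclideanSpace ℝ ι}
    (hx : x ∈ Submodule.span ℝ (hA.eigenvectorBasis '' (T : Set ι))) {i : ι} (hi : i ∉ T) :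
    hA.eigenvectorBasis.repr x i = 0 := by
  rw [OrthonormalBasis.repr_apply_apply]
  induction hx using Submodule.span_induction with
  | mem y hy =>
      obtain ⟨j, hj, rfl⟩ := hy
      exact hA.eigenvectorBasis.orthonormal.2 (fun h => hi (h ▸ hj))
  | zero => exact inner_zero_right _
  | add y z _ _ h1 h2 => rw [inner_add_right, h1, h2, add_zero]
  | smul a y _ h1 => rw [real_inner_smul_right, h1, mul_zero]

theorem finrank_span_eigvecs (T : Finset ι) :
    Module.finrank ℝ (Submodule.span ℝ (hA.eigenvectorBasis '' (T : Set ι))) = T.card := by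
  have li : LinearIndependent ℝ
      (⇑hA.eigenvectorBasis ∘ (Subtype.val : {x : ι // x ∈ (T : Set ι)} → ι)) :=
    (hA.eigenvectorBasis.orthonormal.linearIndependent).comp _ Subtype.val_injective
  have him : hA.eigenvectorBasis '' (T : Set ι)
      = Set.range (⇑hA.eigenvectorBasis ∘ (Subtype.val : {x : ι // x ∈ (T : Set ι)} → ι)) := by
    rw [Set.range_comp, Subtype.range_coe]
  rw [him, finrank_span_eq_card li]
  simp

theorem finrank_le_count (lam : ℝ) (W : Submodule ℝ (EuclideanSpace ℝ ι))
    (hW : ∀ x ∈ W, ⟪x, Matrix.toEuclideanLin A x⟫ ≤ lam * ⟪x, x⟫) :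
    Module.finrank ℝ W ≤ (univ.filter (fun i => hA.eigenvalues i ≤ lam)).card := by
  by_contra hcon
  push_neg at hcon
  set T : Finset ι := univ.filter (fun i => ¬ hA.eigenvalues i ≤ lam) with hT
  set F := Submodule.span ℝ (hA.eigenvectorBasis '' (T : Set ι)) with hF
  have hcard : (univ.filter (fun i => hA.eigenvalues i ≤ lam)).card + T.card = Fintype.card ι := by
    rw [hT, Finset.card_filter_add_card_filter_not, Finset.card_univ]
  have hrF : Module.finrank ℝ F = T.card := finrank_span_eigvecs hA T
  have hsum : Fintype.card ι < Module.finrank ℝ W + Module.finrank ℝ F := by omega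
  have hsup := Submodule.finrank_sup_add_finrank_inf_eq W F
  have hle : Module.finrank ℝ ↥(W ⊔ F) ≤ Fintype.card ι := by
    have h : Module.finrank ℝ ↥(W ⊔ F) ≤ Module.finrank ℝ (EuclideanSpace ℝ ι) :=
      Submodule.finrank_le _
    rwa [finrank_euclideanSpace] at h
  have hpos : 0 < Module.finrank ℝ ↥(W ⊓ F) := by omega
  have : Nontrivial ↥(W ⊓ F) := Module.nontrivial_of_finrank_pos hpos
  obtain ⟨y, hy⟩ := exists_ne (0 : ↥(W ⊓ F))
  have hxW : (y : EuclideanSpace ℝ ι) ∈ W := y.2.1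
  have hxF : (y : EuclideanSpace ℝ ι) ∈ F := y.2.2
  have hxne : (y : EuclideanSpace ℝ ι) ≠ 0 := fun h => hy (Subtype.ext h)
  set c := hA.eigenvectorBasis.repr (y : EuclideanSpace ℝ ι) with hc
  have hczero : ∀ i, hA.eigenvalues i ≤ lam → c i = 0 := by
    intro i hi
    exact repr_zero_of_mem_span hA T hxF (by simp [hT, hi])
  have hcne : ∃ i, c i ≠ 0 := by
    by_contra hall
    push_neg at hall
    apply hxne
    have : c = 0 := by ext i; exact hall i
    simpa [hc] using hA.eigenvectorBasis.repr.map_eq_zero_iff.1 this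
  have hstrict : 0 < ∑ i, (hA.eigenvalues i - lam) * (c i)^2 := by
    obtain ⟨i0, hi0⟩ := hcne
    refine Finset.sum_pos' (fun i _ => ?_) ⟨i0, Finset.mem_univ i0, ?_⟩
    · by_cases h : hA.eigenvalues i ≤ lam
      · rw [hczero i h]; simp
      · have h' : lam ≤ hA.eigenvalues i := le_of_not_ge h
        nlinarith [sq_nonneg (c i)]
    · have hi0' : ¬ hA.eigenvalues i0 ≤ lam := fun h => hi0 (hczero i0 h)
      have h1 : lam < hA.eigenvalues i0 := lt_of_not_ge hi0'
      have h2 : 0 < (c i0)^2 := by positivity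
      nlinarith
  have hexp : ∑ i, (hA.eigenvalues i - lam) * (c i)^2
      = (∑ i, hA.eigenvalues i * (c i)^2) - lam * ∑ i, (c i)^2 := by
    rw [Finset.mul_sum, ← Finset.sum_sub_distrib]
    exact Finset.sum_congr rfl fun i _ => by ring
  have hq := qf_eq_sum hA (y : EuclideanSpace ℝ ι)
  have hnorm := inner_eq_sum_repr hA (y : EuclideanSpace ℝ ι) (y : EuclideanSpace ℝ ι)
  have hWy := hW _ hxW
  rw [hq, hnorm] at hWy
  have hnorm2 : ∑ i, hA.eigenvectorBasis.repr (y : EuclideanSpace ℝ ι) i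
      * hA.eigenvectorBasis.repr (y : EuclideanSpace ℝ ι) i = ∑ i, (c i)^2 := by
    exact Finset.sum_congr rfl fun i _ => by rw [← hc]; ring
  rw [hnorm2] at hWy
  rw [hexp] at hstrict
  simp only [← hc] at hWy
  linarith

theorem exists_good_subspace (lam : ℝ) :
    ∃ E : Submodule ℝ (EuclideanSpace ℝ ι),
      Module.finrank ℝ E = (univ.filter (fun i => hA.eigenvalues i ≤ lam)).card ∧
      ∀ x ∈ E, ⟪x, Matrix.toEuclideanLin A x⟫ ≤ lam * ⟪x, x⟫ := by
  set T : Finset ι := univ.filter (fun i => hA.eigenvalues i ≤ lam) with hT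
  refine ⟨Submodule.span ℝ (hA.eigenvectorBasis '' (T : Set ι)), finrank_span_eigvecs hA T, ?_⟩
  intro x hx
  set c := hA.eigenvectorBasis.repr x with hc
  have hczero : ∀ i, ¬ hA.eigenvalues i ≤ lam → c i = 0 := by
    intro i hi
    exact repr_zero_of_mem_span hA T hx (by simp [hT, hi])
  rw [qf_eq_sum hA, inner_eq_sum_repr hA, ← hc, Finset.mul_sum]
  refine Finset.sum_le_sum fun i _ => ?_
  by_cases h : hA.eigenvalues i ≤ lam
  · have he : c i * c i = (c i)^2 := by ring
    rw [he]
    nlinarith [sq_nonneg (c i)]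
  · rw [hczero i h]; simp

end herm

theorem count_le_count_add_rank (C D : Matrix ι ι ℝ) (hC : C.IsHermitian) (hD : D.IsHermitian)
    (lam : ℝ) :
    (univ.filter (fun i => hC.eigenvalues i ≤ lam)).card ≤
      (univ.filter (fun i => hD.eigenvalues i ≤ lam)).card + (C - D).rank := by
  obtain ⟨E, hEr, hEq⟩ := exists_good_subspace hC lam
  set K := LinearMap.ker (Matrix.toEuclideanLin (C - D)) with hK
  have hrk : (C - D).rank + Module.finrank ℝ ↥K = Fintype.card ι := by
    have h1 : (C - D).rank
        = Module.finrank ℝ ↥(LinearMap.range (Matrix.toEuclideanLin (C - D))) := by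
      rw [Matrix.rank_eq_finrank_range_toLin (C - D) (PiLp.basisFun 2 ℝ ι) (PiLp.basisFun 2 ℝ ι)]
      rfl
    rw [h1, LinearMap.finrank_range_add_finrank_ker, finrank_euclideanSpace]
  have hWq : ∀ x ∈ E ⊓ K, ⟪x, Matrix.toEuclideanLin D x⟫ ≤ lam * ⟪x, x⟫ := by
    rintro x ⟨hxE, hxK⟩
    have hker : Matrix.toEuclideanLin (C - D) x = 0 := hxK
    have heq : Matrix.toEuclideanLin D x = Matrix.toEuclideanLin C x := by
      have h3 := map_sub Matrix.toEuclideanLin C D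
      have h2 : Matrix.toEuclideanLin C x - Matrix.toEuclideanLin D x = 0 := by
        rw [← LinearMap.sub_apply, ← h3]; exact hker
      linear_combination (norm := module) -h2
    rw [heq]
    exact hEq x hxE
  have hfin : Module.finrank ℝ ↥(E ⊓ K) ≤ (univ.filter (fun i => hD.eigenvalues i ≤ lam)).card :=
    finrank_le_count hD lam _ hWq
  have hsup := Submodule.finrank_sup_add_finrank_inf_eq E K
  have hle : Module.finrank ℝ ↥(E ⊔ K) ≤ Fintype.card ι := by
    have h : Module.finrank ℝ ↥(E ⊔ K) ≤ Module.finrank ℝ (EuclideanSpace ℝ ι) :=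
      Submodule.finrank_le _
    rwa [finrank_euclideanSpace] at h
  omega

theorem rank_neg' (M : Matrix ι ι ℝ) : (-M).rank = M.rank := by
  unfold Matrix.rank
  have h : LinearMap.range (-M).mulVecLin = LinearMap.range M.mulVecLin := by
    rw [show (-M).mulVecLin = -(M.mulVecLin) from by ext x; simp [Matrix.neg_mulVec],
      LinearMap.range_neg]
  rw [h]

theorem specCount_eq_card {A : Matrix ι ι ℝ} (hA : A.IsHermitian) (lam : ℝ) :
    specCount A lam = ((univ.filter (fun i => hA.eigenvalues i ≤ lam)).card : ℝ) := by
  unfold specCount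
  rw [charpoly_herm hA]
  congr 1
  rw [Multiset.filter_map, Multiset.card_map]
  rfl

theorem abs_specCount_sub_le {C D : Matrix ι ι ℝ} (hC : C.IsHermitian) (hD : D.IsHermitian)
    (lam : ℝ) :
    |specCount C lam - specCount D lam| ≤ ((C - D).rank : ℝ) := by
  have h1 := count_le_count_add_rank C D hC hD lam
  have h2 := count_le_count_add_rank D C hD hC lam
  have h3 : (D - C).rank = (C - D).rank := by
    rw [show D - C = -(C - D) from by abel, rank_neg']
  rw [h3] at h2
  rw [specCount_eq_card hC, specCount_eq_card hD, abs_sub_le_iff]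
  constructor
  · have h4 := (Nat.cast_le (α := ℝ)).2 h1
    push_cast at h4
    linarith
  · have h4 := (Nat.cast_le (α := ℝ)).2 h2
    push_cast at h4
    linarith

end SpectralAux

theorem lap_diff_eq_diagonal [DecidableEq V] (G : SimpleGraph V) (s : Finset V) :
    lapCompress G s - lapInduced G s = Matrix.diagonal (fun x : s =>
      ((G.neighborSet (x : V)).ncard : ℝ)
        - ((G.neighborSet (x : V) ∩ (s : Set V)).ncard : ℝ)) := by
  ext x y
  by_cases h : x = y
  · subst h
    simp [lapCompress, lapInduced, Matrix.diagonal_apply_eq]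
  · have h' : ¬ ((x : V) = (y : V)) := fun hc => h (Subtype.ext hc)
    simp [lapCompress, lapInduced, Matrix.diagonal_apply_ne _ h, h', h]

theorem lap_rank_le [DecidableEq V] (G : SimpleGraph V) (s : Finset V) :
    (lapCompress G s - lapInduced G s).rank ≤ (gBoundary G (s : Set V)).ncard := by
  rw [lap_diff_eq_diagonal, Matrix.rank_diagonal]
  have hbfin : (gBoundary G (s : Set V)).Finite := s.finite_toSet.subset (fun x hx => hx.1)
  haveI := hbfin.to_subtype
  set w : s → ℝ := fun x => ((G.neighborSet (x : V)).ncard : ℝ)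
      - ((G.neighborSet (x : V) ∩ (s : Set V)).ncard : ℝ) with hw
  have hmem : ∀ i : {i : s // w i ≠ 0}, ((i : s) : V) ∈ gBoundary G (s : Set V) := by
    rintro ⟨⟨x, hxs⟩, hwx⟩
    by_contra hb
    apply hwx
    have hsub : G.neighborSet x ⊆ (s : Set V) := by
      intro y hy
      by_contra hys
      exact hb ⟨hxs, y, hys, hy⟩
    have : G.neighborSet x ∩ (s : Set V) = G.neighborSet x := Set.inter_eq_left.2 hsub
    simp [hw, this]
  have finj : Function.Injective
      (fun i : {i : s // w i ≠ 0} => (⟨((i : s) : V), hmem i⟩ : (gBoundary G (s : Set V)))) := by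
    rintro i j hij
    simp only [Subtype.mk.injEq] at hij
    exact Subtype.ext (Subtype.ext hij)
  calc Fintype.card {i : s // w i ≠ 0} = Nat.card {i : s // w i ≠ 0} :=
        (Nat.card_eq_fintype_card).symm
    _ ≤ Nat.card (gBoundary G (s : Set V)) := Nat.card_le_card_of_injective _ finj
    _ = (gBoundary G (s : Set V)).ncard := rfl

theorem lapCompress_isHermitian [DecidableEq V] (G : SimpleGraph V) (s : Finset V) :
    (lapCompress G s).IsHermitian := by
  show _ = _
  ext x y
  by_cases h : x = y
  · subst h; simp [Matrix.conjTranspose_apply, lapCompress]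
  · have h1 : ¬ ((x : V) = (y : V)) := fun hc => h (Subtype.ext hc)
    have h2 : ¬ ((y : V) = (x : V)) := fun hc => h (Subtype.ext hc.symm)
    simp [Matrix.conjTranspose_apply, lapCompress, h1, h2, G.adj_comm, h, Ne.symm h]

theorem lapInduced_isHermitian [DecidableEq V] (G : SimpleGraph V) (s : Finset V) :
    (lapInduced G s).IsHermitian := by
  show _ = _
  ext x y
  by_cases h : x = y
  · subst h; simp [Matrix.conjTranspose_apply, lapInduced]
  · have h1 : ¬ ((x : V) = (y : V)) := fun hc => h (Subtype.ext hc)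
    have h2 : ¬ ((y : V) = (x : V)) := fun hc => h (Subtype.ext hc.symm)
    simp [Matrix.conjTranspose_apply, lapInduced, h1, h2, G.adj_comm, h, Ne.symm h]

/-- on a Følner sequence, the compression of the Laplacian and the
intrinsic Laplacian of the subgraph differ by an operator of rank at most |∂G_n|;
hence their normalized spectral distribution functions are uniformly |∂G_n|/|V(G_n)|
close, a quantity tending to 0. -/
theorem laplacian_compression_comparison (V : Type) [DecidableEq V] [Infinite V]
    (G : SimpleGraph V) (hconn : G.Connected) (d : ℕ) (hdeg : degBound G d)
    (S : ℕ → Finset V) (hne : ∀ n, (S n).Nonempty)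
    (hfolner : Filter.Tendsto
      (fun n => ((gBoundary G ((S n) : Set V)).ncard : ℝ) / ((S n).card : ℝ))
      Filter.atTop (nhds 0)) :
    (∀ n, (lapCompress G (S n) - lapInduced G (S n)).rank ≤
        (gBoundary G ((S n) : Set V)).ncard) ∧
    (∀ n (lam : ℝ),
      |specCount (lapCompress G (S n)) lam / ((S n).card : ℝ) -
        specCount (lapInduced G (S n)) lam / ((S n).card : ℝ)| ≤
        ((gBoundary G ((S n) : Set V)).ncard : ℝ) / ((S n).card : ℝ)) ∧
    Filter.Tendsto
      (fun n => ⨆ lam : ℝ,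
        |specCount (lapCompress G (S n)) lam / ((S n).card : ℝ) -
          specCount (lapInduced G (S n)) lam / ((S n).card : ℝ)|)
      Filter.atTop (nhds 0) := by
  have part1 : ∀ n, (lapCompress G (S n) - lapInduced G (S n)).rank ≤
      (gBoundary G ((S n) : Set V)).ncard := fun n => lap_rank_le G (S n)
  have part2 : ∀ n (lam : ℝ),
      |specCount (lapCompress G (S n)) lam / ((S n).card : ℝ) -
        specCount (lapInduced G (S n)) lam / ((S n).card : ℝ)| ≤
        ((gBoundary G ((S n) : Set V)).ncard : ℝ) / ((S n).card : ℝ) := by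
    intro n lam
    have hc : (0 : ℝ) < ((S n).card : ℝ) := by exact_mod_cast (hne n).card_pos
    have habs := abs_specCount_sub_le (lapCompress_isHermitian G (S n))
      (lapInduced_isHermitian G (S n)) lam
    have hrle : (((lapCompress G (S n) - lapInduced G (S n)).rank : ℝ)) ≤
        ((gBoundary G ((S n) : Set V)).ncard : ℝ) := by exact_mod_cast part1 n
    rw [div_sub_div_same, abs_div, abs_of_pos hc]
    gcongr
    linarith
  refine ⟨part1, part2, ?_⟩
  have hbdd : ∀ n, BddAbove (Set.range fun lam : ℝ =>
      |specCount (lapCompress G (S n)) lam / ((S n).card : ℝ) -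
        specCount (lapInduced G (S n)) lam / ((S n).card : ℝ)|) := by
    intro n
    refine ⟨((gBoundary G ((S n) : Set V)).ncard : ℝ) / ((S n).card : ℝ), ?_⟩
    rintro _ ⟨lam, rfl⟩
    exact part2 n lam
  refine tendsto_of_tendsto_of_tendsto_of_le_of_le tendsto_const_nhds hfolner ?_ ?_
  · intro n
    exact le_trans (abs_nonneg _) (le_ciSup (hbdd n) (0 : ℝ))
  · intro n
    exact ciSup_le (part2 n)


end GraphPaper
end
end
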